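/- Let f : ℝⁿ → ℝⁿ and let α > 0. Suppose that (i) f is continuous on ℝⁿ; (ii) f is locally injective, i.e. every x ∈ ℝⁿ admits a neighbourhood on which f is injective; (iii) f is α-covering at each x ∈ ℝⁿ. Then f is a bijection of ℝⁿ onto ℝⁿ, and its inverse f⁻¹ : ℝⁿ → ℝⁿ is Lipschitz continuous on ℝⁿ with constant α⁻¹, i.e. ‖f⁻¹(y₁) − f⁻¹(y₂)‖ ≤ α⁻¹‖y₁ − y₂‖ for all y₁, y₂ ∈ ℝⁿ. -/

import Mathlib

open Metric Set
open scoped ENNReal NNReal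

noncomputable section

variable {E F : Type*} [NormedAddCommGroup E] [NormedAddCommGroup F]

/-- `f` is `α`-covering at `x`: for every `ε > 0` there is `r ∈ (0, ε]` with
`B̄(f x, α r) ⊆ f (B̄(x, r))`. -/
def AlphaCoveringAt (f : E → F) (x : E) (α : ℝ) : Prop :=
  ∀ ε > (0:ℝ), ∃ r : ℝ, 0 < r ∧ r ≤ ε ∧
    closedBall (f x) (α * r) ⊆ f '' closedBall x r

/-- The covering bound `cov(f, x)`: supremum of all `α > 0` for which `f` is
`α`-covering at `x`. -/
def covBound (f : E → F) (x : E) : ℝ≥0∞ :=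
  ⨆ (α : ℝ≥0) (_ : 0 < α ∧ AlphaCoveringAt f x (α : ℝ)), (α : ℝ≥0∞)

/-- `f` is linearly open around `xb` with constant `α`. -/
def LinOpenWith (f : E → F) (xb : E) (α : ℝ) : Prop :=
  ∃ U ∈ nhds xb, ∃ V ∈ nhds (f xb), ∀ x ∈ U, ∀ r > (0:ℝ),
    ball (f x) (α * r) ∩ V ⊆ f '' ball x r

/-- The exact linear openness bound `lop(f, xb)` (`0` if no constant works). -/
def lopBound (f : E → F) (xb : E) : ℝ≥0∞ :=
  ⨆ (α : ℝ≥0) (_ : 0 < α ∧ LinOpenWith f xb (α : ℝ)), (α : ℝ≥0∞)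

/-- `ℓ` is a Lipschitz constant of `h` on some neighbourhood of `xb`. -/
def IsLipConstAround (h : E → F) (xb : E) (ℓ : ℝ) : Prop :=
  ∃ U ∈ nhds xb, ∀ x₁ ∈ U, ∀ x₂ ∈ U, ‖h x₁ - h x₂‖ ≤ ℓ * ‖x₁ - x₂‖

/-- `lip(h, xb)`: infimum of all `ℓ > 0` which are Lipschitz constants of `h`
on some neighbourhood of `xb` (`∞` if `h` is not locally Lipschitz at `xb`). -/
def lipBound (h : E → F) (xb : E) : ℝ≥0∞ :=
  ⨅ (ℓ : ℝ≥0) (_ : 0 < ℓ ∧ IsLipConstAround h xb (ℓ : ℝ)), (ℓ : ℝ≥0∞)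

/-- `β` is a metric injectivity constant for `g` on some closed ball around `xb`. -/
def IsInjConstAround (g : E → F) (xb : E) (β : ℝ) : Prop :=
  ∃ δ > (0:ℝ), ∀ x₁ ∈ closedBall xb δ, ∀ x₂ ∈ closedBall xb δ,
    β * ‖x₁ - x₂‖ ≤ ‖g x₁ - g x₂‖

/-- `g` is metrically injective around `xb`. -/
def MetricallyInjectiveAround (g : E → F) (xb : E) : Prop :=
  ∃ β > (0:ℝ), IsInjConstAround g xb β

/-- The metric injection bound `inj(g, xb)`: supremum of all valid `β > 0`. -/
def injBound (g : E → F) (xb : E) : ℝ≥0∞ :=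
  ⨆ (β : ℝ≥0) (_ : 0 < β ∧ IsInjConstAround g xb (β : ℝ)), (β : ℝ≥0∞)

/-- `h` is a strict `μ`-estimator of `f` at `xb`: `h xb = f xb` and
`lip(f - h, xb) ≤ μ`. -/
def IsStrictEstimator (f h : E → F) (xb : E) (μ : ℝ≥0) : Prop :=
  h xb = f xb ∧ lipBound (fun x => f x - h x) xb ≤ (μ : ℝ≥0∞)

/-- `g` is strongly (metrically) regular around `xb`: it is linearly open around
`xb` and the set-valued inverse `g⁻¹` has a single-valued graphical localization
around `(g xb, xb)`. -/
def StronglyRegularAround (g : E → F) (xb : E) : Prop :=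
  (∃ α > (0:ℝ), LinOpenWith g xb α) ∧
  ∃ V ∈ nhds (g xb), ∃ U ∈ nhds xb, ∀ y ∈ V, ∃ x : E, g ⁻¹' {y} ∩ U = {x}

section helpers
lemma clamp_lip (s t t' : ℝ) : |max 0 (min t s) - max 0 (min t' s)| ≤ |t - t'| := by
  rw [max_comm (0:ℝ) (min t s), max_comm (0:ℝ) (min t' s)]
  refine (abs_max_sub_max_le_abs _ _ _).trans ?_
  refine (abs_min_sub_min_le_max t s t' s).trans ?_
  simp

lemma clamp_comp {s m : ℝ} (hm0 : 0 ≤ m) (hms : m ≤ s) (t : ℝ) :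
    min (max 0 (min t s)) m = max 0 (min t m) := by
  calc min (max 0 (min t s)) m = min (max 0 (min t s)) (max 0 m) := by rw [max_eq_right hm0]
  _ = max 0 (min (min t s) m) := (max_min_distrib_left 0 (min t s) m).symm
  _ = max 0 (min t m) := by rw [min_assoc, min_eq_right hms]

lemma seg_sub {G : Type*} [NormedAddCommGroup G] [NormedSpace ℝ G] (y₀ y : G) (t t' : ℝ) :
    (y₀ + t • (y - y₀)) - (y₀ + t' • (y - y₀)) = (t - t') • (y - y₀) := by
  rw [sub_smul]; abel

lemma seg_norm {G : Type*} [NormedAddCommGroup G] [NormedSpace ℝ G] (y₀ y : G) (t t' : ℝ) :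
    ‖(y₀ + t • (y - y₀)) - (y₀ + t' • (y - y₀))‖ = |t - t'| * ‖y - y₀‖ := by
  rw [seg_sub, norm_smul, Real.norm_eq_abs]
end helpers

variable {G : Type*} [NormedAddCommGroup G] [NormedSpace ℝ G] [ProperSpace G]


theorem lemA {f : G → G} {α : ℝ} (hα : 0 < α) (hf : Continuous f)
    (hcov : ∀ x, AlphaCoveringAt f x α) (x y : G) :
    ∃ z : G, ‖z - x‖ ≤ α⁻¹ * ‖y - f x‖ ∧ f z = y := by
  have hd0 : (0:ℝ) ≤ ‖y - f x‖ := norm_nonneg _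
  set d := ‖y - f x‖ with hd
  set R := α⁻¹ * d with hR
  have hR0 : 0 ≤ R := by positivity
  set C : Set (ℝ × G) := {p | p.1 ∈ Icc 0 R ∧ p.2 ∈ closedBall x R ∧
    ‖p.2 - x‖ ≤ p.1 ∧ ‖f p.2 - y‖ + α * p.1 ≤ d} with hC
  have hsub : C ⊆ Icc 0 R ×ˢ closedBall x R := by
    rintro ⟨t, z⟩ ⟨h1, h2, _, _⟩; exact ⟨h1, h2⟩
  have hclosed : IsClosed C := by
    have h1 : IsClosed {p : ℝ × G | ‖p.2 - x‖ ≤ p.1} :=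
      isClosed_le ((continuous_snd.sub continuous_const).norm) continuous_fst
    have h2 : IsClosed {p : ℝ × G | ‖f p.2 - y‖ + α * p.1 ≤ d} :=
      isClosed_le ((((hf.comp continuous_snd).sub continuous_const).norm).add
        (continuous_const.mul continuous_fst)) continuous_const
    have h3 : IsClosed {p : ℝ × G | p.1 ∈ Icc 0 R} := isClosed_Icc.preimage continuous_fst
    have h4 : IsClosed {p : ℝ × G | p.2 ∈ closedBall x R} :=
      Metric.isClosed_closedBall.preimage continuous_snd
    have : C = {p : ℝ × G | p.1 ∈ Icc 0 R} ∩ ({p | p.2 ∈ closedBall x R} ∩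
        ({p : ℝ × G | ‖p.2 - x‖ ≤ p.1} ∩ {p | ‖f p.2 - y‖ + α * p.1 ≤ d})) := by
      ext p; simp [hC, and_assoc]
    rw [this]
    exact h3.inter (h4.inter (h1.inter h2))
  have hCc : IsCompact C :=
    IsCompact.of_isClosed_subset (isCompact_Icc.prod (isCompact_closedBall x R)) hclosed hsub
  set S : Set ℝ := Prod.fst '' C with hS
  have hbdd : BddAbove S := by
    refine ⟨R, ?_⟩; rintro t ⟨p, hp, rfl⟩; exact (hsub hp).1.2
  have hSc : IsCompact S := hCc.image continuous_fst
  have h0S : (0:ℝ) ∈ S := by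
    refine ⟨(0, x), ⟨⟨le_refl _, hR0⟩, by simp [hR0], by simp, ?_⟩, rfl⟩
    simp only [mul_zero, add_zero]
    rw [norm_sub_rev, ← hd]
  have hTS : sSup S ∈ S := hSc.sSup_mem ⟨0, h0S⟩
  obtain ⟨⟨T, z⟩, hTz, hT'⟩ := hTS
  obtain ⟨⟨hT0, hTR⟩, -, hzx, hzy⟩ := hTz
  simp only at hT0 hTR hzx hzy hT'
  by_cases hfz : f z = y
  · exact ⟨z, hzx.trans hTR, hfz⟩
  exfalso
  have hd' : (0:ℝ) < ‖f z - y‖ := by simpa using sub_ne_zero_of_ne hfz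
  obtain ⟨r, hr0, hrle, hsubc⟩ := hcov z (α⁻¹ * ‖f z - y‖) (by positivity)
  have hαr : α * r ≤ ‖f z - y‖ := by
    have := mul_le_mul_of_nonneg_left hrle hα.le
    calc α * r ≤ α * (α⁻¹ * ‖f z - y‖) := this
    _ = ‖f z - y‖ := by field_simp
  have hcoef : (0:ℝ) ≤ α * r / ‖f z - y‖ := le_of_lt (div_pos (mul_pos hα hr0) hd')
  have hwball : f z + (α * r / ‖f z - y‖) • (y - f z) ∈ closedBall (f z) (α * r) := by
    rw [mem_closedBall, dist_eq_norm, add_sub_cancel_left, norm_smul, Real.norm_eq_abs,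
      abs_of_nonneg hcoef, norm_sub_rev y (f z), div_mul_cancel₀ _ hd'.ne']
  obtain ⟨z', hz'ball, hz'⟩ := hsubc hwball
  have hwy : ‖f z' - y‖ = ‖f z - y‖ - α * r := by
    rw [hz']
    have heq : f z + (α * r / ‖f z - y‖) • (y - f z) - y
        = (1 - α * r / ‖f z - y‖) • (f z - y) := by module
    rw [heq, norm_smul, Real.norm_eq_abs, abs_of_nonneg, sub_mul, one_mul,
      div_mul_cancel₀ _ hd'.ne']
    rw [sub_nonneg, div_le_one hd']; exact hαr
  have hmem : T + r ∈ S := by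
    have hTrR : T + r ≤ R := by
      rw [hR, ← mul_le_mul_iff_right₀ hα]
      have h2 : α * (α⁻¹ * d) = d := by field_simp
      rw [h2]
      nlinarith [hzy, hαr]
    have hz'x : ‖z' - x‖ ≤ T + r := by
      calc ‖z' - x‖ ≤ ‖z' - z‖ + ‖z - x‖ := norm_sub_le_norm_sub_add_norm_sub _ _ _
      _ ≤ T + r := by
          rw [mem_closedBall, dist_eq_norm] at hz'ball; linarith [add_le_add hz'ball hzx]
    refine ⟨(T + r, z'), ⟨⟨show (0:ℝ) ≤ T + r by linarith,
      show T + r ≤ R from hTrR⟩, show z' ∈ closedBall x R from ?_,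
      show ‖z' - x‖ ≤ T + r from hz'x, show ‖f z' - y‖ + α * (T + r) ≤ d from ?_⟩, rfl⟩
    · rw [mem_closedBall, dist_eq_norm]
      calc ‖z' - x‖ ≤ ‖z' - z‖ + ‖z - x‖ := norm_sub_le_norm_sub_add_norm_sub _ _ _
      _ ≤ r + T := by
          refine add_le_add ?_ hzx
          rw [mem_closedBall, dist_eq_norm] at hz'ball; exact hz'ball
      _ ≤ R := by linarith
    · rw [hwy]; linarith [hzy]
  have hle := le_csSup hbdd hmem
  rw [← hT'] at hle
  linarith


/-- A partial lift of the segment `t ↦ y₀ + t • (y - y₀)` through `f`, starting at `x₀`,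
defined on `[0, s]`, with the sharp Lipschitz estimate built in. -/
def IsLift (f : G → G) (α : ℝ) (x₀ y₀ y : G) (s : ℝ) (u : ℝ → G) : Prop :=
  u 0 = x₀ ∧ (∀ t ∈ Icc 0 s, f (u t) = y₀ + t • (y - y₀)) ∧
  ∀ t ∈ Icc 0 s, ∀ t' ∈ Icc 0 s, ‖u t - u t'‖ ≤ (α⁻¹ * ‖y - y₀‖) * |t - t'|

theorem injrad {f : G → G} (hinj : ∀ x : G, ∃ U ∈ nhds x, Set.InjOn f U) (x : G) :
    ∃ δ > (0:ℝ), Set.InjOn f (closedBall x δ) := by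
  obtain ⟨U, hU, hUinj⟩ := hinj x
  obtain ⟨ε, hε0, hεU⟩ := Metric.mem_nhds_iff.mp hU
  exact ⟨ε / 2, by linarith, hUinj.mono (fun z hz =>
    hεU (lt_of_le_of_lt (mem_closedBall.mp hz) (by linarith)))⟩

theorem liftUnique {f : G → G} {α : ℝ} (hα : 0 < α)
    (hinj : ∀ x : G, ∃ U ∈ nhds x, Set.InjOn f U)
    {x₀ y₀ y : G} {s : ℝ} {u v : ℝ → G}
    (hu : IsLift f α x₀ y₀ y s u) (hv : IsLift f α x₀ y₀ y s v) :
    ∀ t ∈ Icc 0 s, u t = v t := by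
  intro t ht
  have hs0 : (0:ℝ) ≤ s := ht.1.trans ht.2
  obtain ⟨hu0, huf, huL⟩ := hu
  obtain ⟨hv0, hvf, hvL⟩ := hv
  set c := α⁻¹ * ‖y - y₀‖ with hc
  have hc0 : 0 ≤ c := by positivity
  set W : Set ℝ := {t | t ∈ Icc 0 s ∧ ∀ τ ∈ Icc 0 t, u τ = v τ} with hW
  have h0W : (0:ℝ) ∈ W := by
    refine ⟨⟨le_refl _, hs0⟩, fun τ hτ => ?_⟩
    have : τ = 0 := le_antisymm hτ.2 hτ.1
    rw [this, hu0, hv0]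
  have hbdd : BddAbove W := ⟨s, fun t htW => htW.1.2⟩
  set T := sSup W with hT
  have hT0 : 0 ≤ T := le_csSup hbdd h0W
  have hTs : T ≤ s := csSup_le ⟨0, h0W⟩ fun t htW => htW.1.2
  have hTW : T ∈ W := by
    refine ⟨⟨hT0, hTs⟩, fun τ hτ => ?_⟩
    rcases lt_or_eq_of_le hτ.2 with hlt | heq
    · obtain ⟨t', ht'W, hlt'⟩ := exists_lt_of_lt_csSup ⟨0, h0W⟩ hlt
      exact ht'W.2 τ ⟨hτ.1, hlt'.le⟩
    · rw [heq, ← sub_eq_zero, ← norm_le_zero_iff]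
      refine le_of_forall_pos_le_add (fun ε hε => ?_)
      obtain ⟨t', ht'W, hlt'⟩ := exists_lt_of_lt_csSup ⟨0, h0W⟩
        (show T - ε / (2 * c + 1) < sSup W by
          rw [← hT]; have h0 : 0 < ε / (2*c+1) := by positivity
          linarith)
      have ht'T : t' ≤ T := le_csSup hbdd ht'W
      have ht'0 : 0 ≤ t' := ht'W.1.1
      have huv : u t' = v t' := ht'W.2 t' ⟨ht'0, le_refl _⟩
      have h1 : ‖u T - u t'‖ ≤ c * |T - t'| := huL T ⟨hT0, hTs⟩ t' ht'W.1
      have h2 : ‖v t' - v T‖ ≤ c * |t' - T| := hvL t' ht'W.1 T ⟨hT0, hTs⟩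
      have habs : |T - t'| ≤ ε / (2 * c + 1) := by
        rw [abs_of_nonneg (by linarith)]; linarith
      have h3 : 2 * (c * (ε / (2 * c + 1))) ≤ ε := by
        rw [mul_div_assoc', mul_div_assoc', div_le_iff₀ (by positivity)]
        nlinarith
      have h4 : c * |T - t'| ≤ c * (ε / (2 * c + 1)) := mul_le_mul_of_nonneg_left habs hc0
      calc ‖u T - v T‖ ≤ ‖u T - u t'‖ + ‖v t' - v T‖ := by
            rw [huv]; exact norm_sub_le_norm_sub_add_norm_sub _ _ _
      _ ≤ c * |T - t'| + c * |t' - T| := add_le_add h1 h2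
      _ ≤ 0 + ε := by rw [abs_sub_comm t' T]; linarith
  -- now show T = s
  have hTeq : T = s := by
    by_contra hne
    have hTlt : T < s := lt_of_le_of_ne hTs hne
    obtain ⟨δ, hδ0, hδinj⟩ := injrad hinj (u T)
    set η := min (s - T) (δ / (2 * (c + 1))) with hη
    have hη0 : 0 < η := lt_min (by linarith) (by positivity)
    have hηδ : c * η ≤ δ := by
      have h1 : η ≤ δ / (2 * (c + 1)) := min_le_right _ _
      have : c * η ≤ c * (δ / (2 * (c + 1))) := mul_le_mul_of_nonneg_left h1 hc0
      have h2 : c * (δ / (2 * (c + 1))) ≤ δ / 2 := by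
        rw [mul_div_assoc', div_le_div_iff₀ (by positivity) (by norm_num)]
        nlinarith
      linarith
    have hmem : T + η ∈ W := by
      refine ⟨⟨by linarith, by have := min_le_left (s - T) (δ / (2 * (c + 1))); linarith⟩,
        fun τ hτ => ?_⟩
      by_cases hτT : τ ≤ T
      · exact hTW.2 τ ⟨hτ.1, hτT⟩
      push_neg at hτT
      have hτs : τ ≤ s := by
        have := min_le_left (s - T) (δ / (2 * (c + 1))); linarith [hτ.2]
      have hτIcc : τ ∈ Icc (0:ℝ) s := ⟨hτ.1, hτs⟩
      have hTIcc : T ∈ Icc (0:ℝ) s := ⟨hT0, hTs⟩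
      have h1 : ‖u τ - u T‖ ≤ c * η := by
        calc ‖u τ - u T‖ ≤ c * |τ - T| := huL τ hτIcc T hTIcc
        _ ≤ c * η := by
            refine mul_le_mul_of_nonneg_left ?_ hc0
            rw [abs_of_nonneg (by linarith)]; linarith [hτ.2]
      have h2 : ‖v τ - u T‖ ≤ c * η := by
        have hvT : v T = u T := (hTW.2 T ⟨hT0, le_refl _⟩).symm
        calc ‖v τ - u T‖ = ‖v τ - v T‖ := by rw [hvT]
        _ ≤ c * |τ - T| := hvL τ hτIcc T hTIcc
        _ ≤ c * η := by
            refine mul_le_mul_of_nonneg_left ?_ hc0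
            rw [abs_of_nonneg (by linarith)]; linarith [hτ.2]
      refine hδinj ?_ ?_ ?_
      · rw [mem_closedBall, dist_eq_norm]; linarith
      · rw [mem_closedBall, dist_eq_norm]; linarith
      · rw [huf τ hτIcc, hvf τ hτIcc]
    have := le_csSup hbdd hmem
    rw [← hT] at this
    linarith
  exact hTW.2 t ⟨ht.1, ht.2.trans_eq hTeq.symm⟩

theorem liftMono {f : G → G} {α : ℝ} {x₀ y₀ y : G} {s s' : ℝ} {u : ℝ → G}
    (hu : IsLift f α x₀ y₀ y s u) (h : s' ≤ s) : IsLift f α x₀ y₀ y s' u :=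
  ⟨hu.1, fun t ht => hu.2.1 t ⟨ht.1, ht.2.trans h⟩,
    fun t ht t' ht' => hu.2.2 t ⟨ht.1, ht.2.trans h⟩ t' ⟨ht'.1, ht'.2.trans h⟩⟩

theorem liftExtend {f : G → G} {α : ℝ} (hα : 0 < α) (hf : Continuous f)
    (hcov : ∀ x, AlphaCoveringAt f x α)
    (hinj : ∀ x : G, ∃ U ∈ nhds x, Set.InjOn f U)
    {x₀ y₀ y : G} {T : ℝ} {u : ℝ → G} (hT0 : 0 ≤ T) (hT1 : T < 1)
    (hu : IsLift f α x₀ y₀ y T u) :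
    ∃ η > (0:ℝ), η ≤ 1 - T ∧ ∃ v, IsLift f α x₀ y₀ y (T + η) v := by
  obtain ⟨hu0, huf, huL⟩ := hu
  set c := α⁻¹ * ‖y - y₀‖ with hc
  have hc0 : 0 ≤ c := by positivity
  obtain ⟨δ, hδ0, hδinj⟩ := injrad hinj (u T)
  set η := min (1 - T) (δ / (2 * (c + 1))) with hη
  have hη0 : 0 < η := lt_min (by linarith) (by positivity)
  have hη1 : η ≤ 1 - T := min_le_left _ _
  have hηδ : 2 * (c * η) ≤ δ := by
    have h1 : η ≤ δ / (2 * (c + 1)) := min_le_right _ _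
    have h2 : c * η ≤ c * (δ / (2 * (c + 1))) := mul_le_mul_of_nonneg_left h1 hc0
    have h3 : c * (δ / (2 * (c + 1))) ≤ δ / 2 := by
      rw [mul_div_assoc', div_le_div_iff₀ (by positivity) (by norm_num)]
      nlinarith
    linarith
  have hfuT : f (u T) = y₀ + T • (y - y₀) := huf T ⟨hT0, le_refl _⟩
  set w : ℝ → G := fun t => Classical.choose (lemA hα hf hcov (u T) (y₀ + t • (y - y₀))) with hw
  have hwspec : ∀ t, ‖w t - u T‖ ≤ α⁻¹ * ‖(y₀ + t • (y - y₀)) - f (u T)‖ ∧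
      f (w t) = y₀ + t • (y - y₀) := fun t =>
    Classical.choose_spec (lemA hα hf hcov (u T) (y₀ + t • (y - y₀)))
  have hwdist : ∀ t, ‖w t - u T‖ ≤ c * |t - T| := by
    intro t
    refine ((hwspec t).1).trans ?_
    rw [hfuT, seg_norm]
    exact le_of_eq (by rw [hc]; ring)
  set v : ℝ → G := fun t => if t ≤ T then u t else w t with hv
  have hv_eq_u : ∀ t, t ≤ T → v t = u t := fun t ht => by simp [hv, ht]
  have hv_eq_w : ∀ t, T < t → v t = w t := fun t ht => by simp [hv, not_le.mpr ht]
  have key : ∀ t ∈ Icc (0:ℝ) (T + η), ∀ t' ∈ Icc (0:ℝ) (T + η), t ≤ t' →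
      ‖v t' - v t‖ ≤ c * (t' - t) := by
    intro t ht t' ht' htt
    by_cases h1 : t' ≤ T
    · rw [hv_eq_u t (htt.trans h1), hv_eq_u t' h1]
      have h := huL t' ⟨ht'.1, h1⟩ t ⟨ht.1, htt.trans h1⟩
      rwa [abs_of_nonneg (by linarith)] at h
    push_neg at h1
    by_cases h2 : t ≤ T
    · rw [hv_eq_u t h2, hv_eq_w t' h1]
      have e1 : ‖w t' - u T‖ ≤ c * (t' - T) := by
        have h := hwdist t'; rwa [abs_of_nonneg (by linarith)] at h
      have e2 : ‖u T - u t‖ ≤ c * (T - t) := by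
        have h := huL T ⟨hT0, le_refl _⟩ t ⟨ht.1, h2⟩
        rwa [abs_of_nonneg (by linarith)] at h
      calc ‖w t' - u t‖ ≤ ‖w t' - u T‖ + ‖u T - u t‖ := norm_sub_le_norm_sub_add_norm_sub _ _ _
      _ ≤ c * (t' - T) + c * (T - t) := add_le_add e1 e2
      _ = c * (t' - t) := by ring
    push_neg at h2
    rw [hv_eq_w t h2, hv_eq_w t' h1]
    obtain ⟨z, hz1, hz2⟩ := lemA hα hf hcov (w t) (y₀ + t' • (y - y₀))
    have hfw : f (w t) = y₀ + t • (y - y₀) := (hwspec t).2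
    have hz1' : ‖z - w t‖ ≤ c * (t' - t) := by
      refine hz1.trans ?_
      rw [hfw, seg_norm, abs_of_nonneg (by linarith : (0:ℝ) ≤ t' - t)]
      exact le_of_eq (by rw [hc]; ring)
    have hteta : t - T ≤ η := by linarith [ht.2]
    have ht'eta : t' - T ≤ η := by linarith [ht'.2]
    have htt' : t' - t ≤ η := by linarith
    have hwtd : ‖w t - u T‖ ≤ c * (t - T) := by
      have h := hwdist t; rwa [abs_of_nonneg (by linarith)] at h
    have hwt'd : ‖w t' - u T‖ ≤ c * (t' - T) := by
      have h := hwdist t'; rwa [abs_of_nonneg (by linarith)] at h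
    have hzuT : z ∈ closedBall (u T) δ := by
      rw [mem_closedBall, dist_eq_norm]
      have h4 : ‖z - u T‖ ≤ ‖z - w t‖ + ‖w t - u T‖ := norm_sub_le_norm_sub_add_norm_sub _ _ _
      have h5 : c * (t' - t) ≤ c * η := mul_le_mul_of_nonneg_left htt' hc0
      have h6 : c * (t - T) ≤ c * η := mul_le_mul_of_nonneg_left hteta hc0
      linarith
    have hwt'm : w t' ∈ closedBall (u T) δ := by
      rw [mem_closedBall, dist_eq_norm]
      have h5 : c * (t' - T) ≤ c * η := mul_le_mul_of_nonneg_left ht'eta hc0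
      linarith
    have hzw : z = w t' := hδinj hzuT hwt'm (by rw [hz2, (hwspec t').2])
    rw [← hzw]; exact hz1'
  refine ⟨η, hη0, hη1, v, ?_, ?_, ?_⟩
  · rw [hv_eq_u 0 hT0]; exact hu0
  · intro t ht
    by_cases h : t ≤ T
    · rw [hv_eq_u t h]; exact huf t ⟨ht.1, h⟩
    · push_neg at h; rw [hv_eq_w t h]; exact (hwspec t).2
  · intro t ht t' ht'
    rcases le_total t t' with h | h
    · rw [abs_sub_comm, abs_of_nonneg (sub_nonneg.mpr h), norm_sub_rev]
      exact key t ht t' ht' h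
    · rw [abs_of_nonneg (sub_nonneg.mpr h)]
      exact key t' ht' t ht h

theorem liftExists {f : G → G} {α : ℝ} (hα : 0 < α) (hf : Continuous f)
    (hcov : ∀ x, AlphaCoveringAt f x α)
    (hinj : ∀ x : G, ∃ U ∈ nhds x, Set.InjOn f U)
    (x₀ y : G) : ∃ u, IsLift f α x₀ (f x₀) y 1 u := by
  set y₀ := f x₀ with hy₀
  set c := α⁻¹ * ‖y - y₀‖ with hc
  have hc0 : 0 ≤ c := by positivity
  set L : Set ℝ := {s | s ∈ Icc (0:ℝ) 1 ∧ ∃ u, IsLift f α x₀ y₀ y s u} with hL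
  have h0L : (0:ℝ) ∈ L := by
    refine ⟨⟨le_refl _, zero_le_one⟩, fun _ => x₀, rfl, fun t ht => ?_, fun t ht t' ht' => ?_⟩
    · have : t = 0 := le_antisymm ht.2 ht.1
      rw [this, zero_smul, add_zero, hy₀]
    · simp only [sub_self, norm_zero]
      positivity
  have hbdd : BddAbove L := ⟨1, fun s hs => hs.1.2⟩
  set T := sSup L with hT
  have hT0 : 0 ≤ T := le_csSup hbdd h0L
  have hT1 : T ≤ 1 := csSup_le ⟨0, h0L⟩ fun s hs => hs.1.2
  have hTL : T ∈ L := by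
    rcases eq_or_lt_of_le hT0 with heq | hT0'
    · rw [← heq]; exact h0L
    have happrox : ∀ k : ℕ, ∃ s, s ∈ L ∧ T - 1/(k+1) < s := by
      intro k
      obtain ⟨s, hs, hlt⟩ := exists_lt_of_lt_csSup ⟨0, h0L⟩
        (show T - 1/((k:ℝ)+1) < sSup L by
          rw [← hT]
          have : 0 < 1/((k:ℝ)+1) := by positivity
          linarith)
      exact ⟨s, hs, hlt⟩
    choose sq hsqL hsqlt using happrox
    choose uq huq using fun k => (hsqL k).2
    have hsq0 : ∀ k, 0 ≤ sq k := fun k => (hsqL k).1.1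
    have hsqT : ∀ k, sq k ≤ T := fun k => le_csSup hbdd (hsqL k)
    have hagree : ∀ j k, ∀ t ∈ Icc (0:ℝ) (min (sq j) (sq k)), uq j t = uq k t := by
      intro j k
      exact liftUnique hα hinj (liftMono (huq j) (min_le_left _ _))
        (liftMono (huq k) (min_le_right _ _))
    set q : ℝ → ℕ → ℝ := fun t k => max 0 (min t (sq k)) with hq
    have hqmem : ∀ t k, q t k ∈ Icc (0:ℝ) (sq k) := by
      intro t k
      exact ⟨le_max_left _ _, max_le (hsq0 k) (min_le_right _ _)⟩
    set seq : ℝ → ℕ → G := fun t k => uq k (q t k) with hseq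
    have hkey : ∀ t, ∀ j k N : ℕ, N ≤ j → N ≤ k →
        dist (seq t j) (seq t k) ≤ 2 * c * (1/((N:ℝ)+1)) := by
      intro t j k N hNj hNk
      set m := min (sq j) (sq k) with hm
      have hm0 : 0 ≤ m := le_min (hsq0 j) (hsq0 k)
      have hmN : T - 1/((N:ℝ)+1) < m := by
        have hj : 1/((j:ℝ)+1) ≤ 1/((N:ℝ)+1) := by
          apply one_div_le_one_div_of_le (by positivity)
          exact_mod_cast by omega
        have hk : 1/((k:ℝ)+1) ≤ 1/((N:ℝ)+1) := by
          apply one_div_le_one_div_of_le (by positivity)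
          exact_mod_cast by omega
        rcases min_cases (sq j) (sq k) with ⟨hmin, -⟩ | ⟨hmin, -⟩
        · rw [hm, hmin]; linarith [hsqlt j]
        · rw [hm, hmin]; linarith [hsqlt k]
      have hmT : m ≤ T := (min_le_left _ _).trans (hsqT j)
      set b := max 0 (min t m) with hb
      have hbj : min (q t j) m = b := by
        rw [hq]
        exact clamp_comp hm0 (min_le_left _ _) t
      have hbk : min (q t k) m = b := by
        rw [hq]
        exact clamp_comp hm0 (min_le_right _ _) t
      have hbm : b ∈ Icc (0:ℝ) m := ⟨le_max_left _ _, max_le hm0 (min_le_right _ _)⟩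
      have hqb_j : |q t j - b| ≤ T - m := by
        rw [← hbj, abs_of_nonneg (by simp [sub_nonneg])]
        rcases le_total (q t j) m with h | h
        · rw [min_eq_left h]; linarith
        · rw [min_eq_right h]
          have := (hqmem t j).2
          linarith [hsqT j]
      have hqb_k : |q t k - b| ≤ T - m := by
        rw [← hbk, abs_of_nonneg (by simp [sub_nonneg])]
        rcases le_total (q t k) m with h | h
        · rw [min_eq_left h]; linarith
        · rw [min_eq_right h]
          have := (hqmem t k).2
          linarith [hsqT k]
      have hbIccj : b ∈ Icc (0:ℝ) (sq j) := ⟨hbm.1, hbm.2.trans (min_le_left _ _)⟩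
      have hbIcck : b ∈ Icc (0:ℝ) (sq k) := ⟨hbm.1, hbm.2.trans (min_le_right _ _)⟩
      have hj1 : ‖uq j (q t j) - uq j b‖ ≤ c * (T - m) := by
        refine ((huq j).2.2 (q t j) (hqmem t j) b hbIccj).trans ?_
        exact mul_le_mul_of_nonneg_left hqb_j hc0
      have hk1 : ‖uq k (q t k) - uq k b‖ ≤ c * (T - m) := by
        refine ((huq k).2.2 (q t k) (hqmem t k) b hbIcck).trans ?_
        exact mul_le_mul_of_nonneg_left hqb_k hc0
      have hjk : uq j b = uq k b := hagree j k b hbm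
      have h8 : dist (uq j b) (uq k (q t k)) = ‖uq k (q t k) - uq k b‖ := by
        rw [hjk, dist_comm, dist_eq_norm]
      have htri : dist (seq t j) (seq t k) ≤ ‖uq j (q t j) - uq j b‖ + ‖uq k (q t k) - uq k b‖ := by
        show dist (uq j (q t j)) (uq k (q t k)) ≤ _
        calc dist (uq j (q t j)) (uq k (q t k))
            ≤ dist (uq j (q t j)) (uq j b) + dist (uq j b) (uq k (q t k)) := dist_triangle _ _ _
        _ = ‖uq j (q t j) - uq j b‖ + ‖uq k (q t k) - uq k b‖ := by
              rw [h8, dist_eq_norm]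
      have hTm : T - m ≤ 1/((N:ℝ)+1) := by linarith
      have : c * (T - m) ≤ c * (1/((N:ℝ)+1)) := mul_le_mul_of_nonneg_left hTm hc0
      linarith
    have hcauchy : ∀ t, CauchySeq (seq t) := by
      intro t
      refine cauchySeq_of_le_tendsto_0 (fun N => 2 * c * (1/((N:ℝ)+1)))
        (fun j k N hj hk => hkey t j k N hj hk) ?_
      have := tendsto_one_div_add_atTop_nhds_zero_nat.const_mul (2*c)
      simpa using this
    set u : ℝ → G := fun t => Filter.limUnder Filter.atTop (seq t) with hu
    have htend : ∀ t, Filter.Tendsto (seq t) Filter.atTop (nhds (u t)) := fun t =>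
      (hcauchy t).tendsto_limUnder
    have hsqtend : Filter.Tendsto sq Filter.atTop (nhds T) := by
      have hlow : Filter.Tendsto (fun k : ℕ => T - 1/((k:ℝ)+1)) Filter.atTop (nhds T) := by
        have := tendsto_one_div_add_atTop_nhds_zero_nat.const_sub T
        simpa using this
      exact tendsto_of_tendsto_of_tendsto_of_le_of_le hlow tendsto_const_nhds
        (fun k => (hsqlt k).le) hsqT
    have hqtend : ∀ t ∈ Icc (0:ℝ) T, Filter.Tendsto (fun k => q t k) Filter.atTop (nhds t) := by
      intro t ht
      have h1 : Filter.Tendsto (fun k => max 0 (min t (sq k))) Filter.atTop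
          (nhds (max 0 (min t T))) :=
        Filter.Tendsto.max tendsto_const_nhds (Filter.Tendsto.min tendsto_const_nhds hsqtend)
      rw [min_eq_left ht.2, max_eq_right ht.1] at h1
      exact h1
    refine ⟨⟨hT0, hT1⟩, u, ?_, ?_, ?_⟩
    · have hseq0 : seq 0 = fun _ => x₀ := by
        funext k
        have hq0 : q 0 k = 0 := by
          rw [hq]
          simp [min_eq_left (hsq0 k)]
        show uq k (q 0 k) = x₀
        rw [hq0, (huq k).1]
      exact tendsto_nhds_unique (htend 0) (by rw [hseq0]; exact tendsto_const_nhds)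
    · intro t ht
      have h1 : Filter.Tendsto (fun k => f (seq t k)) Filter.atTop (nhds (f (u t))) :=
        (hf.tendsto _).comp (htend t)
      have h2 : ∀ k, f (seq t k) = y₀ + (q t k) • (y - y₀) := fun k =>
        (huq k).2.1 _ (hqmem t k)
      have hγ : Continuous (fun τ : ℝ => y₀ + τ • (y - y₀)) :=
        continuous_const.add (continuous_id.smul continuous_const)
      have h3 : Filter.Tendsto (fun k => f (seq t k)) Filter.atTop (nhds (y₀ + t • (y - y₀))) := by
        simp only [h2]
        exact (hγ.tendsto _).comp (hqtend t ht)
      exact tendsto_nhds_unique h1 h3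
    · intro t ht t' ht'
      have hlim : Filter.Tendsto (fun k => ‖seq t k - seq t' k‖) Filter.atTop
          (nhds ‖u t - u t'‖) := ((htend t).sub (htend t')).norm
      refine le_of_tendsto hlim (Filter.Eventually.of_forall fun k => ?_)
      have h1 : ‖seq t k - seq t' k‖ ≤ c * |q t k - q t' k| :=
        (huq k).2.2 _ (hqmem t k) _ (hqmem t' k)
      refine h1.trans (mul_le_mul_of_nonneg_left ?_ hc0)
      exact clamp_lip (sq k) t t'
  -- now T must be 1
  obtain ⟨-, u, hu⟩ := hTL
  rcases eq_or_lt_of_le hT1 with heq | hlt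
  · exact ⟨u, heq ▸ hu⟩
  exfalso
  obtain ⟨η, hη0, hη1, v, hv⟩ := liftExtend hα hf hcov hinj hT0 hlt hu
  have : T + η ∈ L := ⟨⟨by linarith, by linarith⟩, v, hv⟩
  have := le_csSup hbdd this
  rw [← hT] at this
  linarith

theorem unifInj {f : G → G} {α : ℝ} (hα : 0 < α)
    (hinj : ∀ x : G, ∃ U ∈ nhds x, Set.InjOn f U)
    {x₀ y₀ y : G} {u : ℝ → G} (hu : IsLift f α x₀ y₀ y 1 u) :
    ∃ δ > (0:ℝ), ∀ t ∈ Icc (0:ℝ) 1, Set.InjOn f (closedBall (u t) δ) := by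
  set c := α⁻¹ * ‖y - y₀‖ with hc
  have hc0 : 0 ≤ c := by positivity
  have hlip : LipschitzOnWith c.toNNReal u (Icc (0:ℝ) 1) := by
    refine LipschitzOnWith.of_dist_le_mul (fun t ht t' ht' => ?_)
    rw [dist_eq_norm, Real.dist_eq, Real.coe_toNNReal c hc0]
    exact hu.2.2 t ht t' ht'
  have hcont : ContinuousOn u (Icc (0:ℝ) 1) := hlip.continuousOn
  have hK : IsCompact (u '' Icc (0:ℝ) 1) := isCompact_Icc.image_of_continuousOn hcont
  choose δp hδp0 hδpinj using injrad hinj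
  have hcover : u '' Icc (0:ℝ) 1 ⊆ ⋃ p : u '' Icc (0:ℝ) 1, ball (p : G) (δp p) := by
    intro x hx
    exact mem_iUnion.mpr ⟨⟨x, hx⟩, mem_ball_self (hδp0 x)⟩
  obtain ⟨δ, hδ0, hball⟩ :=
    lebesgue_number_lemma_of_metric hK (fun _ => isOpen_ball) hcover
  refine ⟨δ / 2, by linarith, fun t ht => ?_⟩
  obtain ⟨p, hp⟩ := hball (u t) ⟨t, ht, rfl⟩
  refine (hδpinj (p : G)).mono ?_
  intro z hz
  have : z ∈ ball (u t) δ := lt_of_le_of_lt (mem_closedBall.mp hz) (by linarith)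
  exact ball_subset_closedBall (hp this)

theorem liftCompare {f : G → G} {α : ℝ} (hα : 0 < α) (hf : Continuous f)
    (hcov : ∀ x, AlphaCoveringAt f x α)
    {x₀ y₀ y y' : G} {u u' : ℝ → G}
    (hu : IsLift f α x₀ y₀ y 1 u) (hu' : IsLift f α x₀ y₀ y' 1 u')
    {δ : ℝ} (hδ0 : 0 < δ) (hδ : ∀ t ∈ Icc (0:ℝ) 1, Set.InjOn f (closedBall (u t) δ))
    (hclose : α⁻¹ * ‖y' - y‖ < δ / 2) :
    ∀ t ∈ Icc (0:ℝ) 1, ‖u' t - u t‖ ≤ α⁻¹ * ‖y' - y‖ * t := by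
  obtain ⟨hu0, huf, huL⟩ := hu
  obtain ⟨hu'0, hu'f, hu'L⟩ := hu'
  set c := α⁻¹ * ‖y - y₀‖ with hc
  set c' := α⁻¹ * ‖y' - y₀‖ with hc'
  set ρ := α⁻¹ * ‖y' - y‖ with hρ
  have hc0 : 0 ≤ c := by positivity
  have hc'0 : 0 ≤ c' := by positivity
  have hρ0 : 0 ≤ ρ := by positivity
  set W : Set ℝ := {s | s ∈ Icc (0:ℝ) 1 ∧ ∀ τ ∈ Icc 0 s, ‖u' τ - u τ‖ ≤ ρ * τ} with hW
  have h0W : (0:ℝ) ∈ W := by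
    refine ⟨⟨le_refl _, zero_le_one⟩, fun τ hτ => ?_⟩
    have hτ0 : τ = 0 := le_antisymm hτ.2 hτ.1
    rw [hτ0, hu'0, hu0]
    simp
  have hbdd : BddAbove W := ⟨1, fun s hs => hs.1.2⟩
  set T := sSup W with hT
  have hT0 : 0 ≤ T := le_csSup hbdd h0W
  have hT1 : T ≤ 1 := csSup_le ⟨0, h0W⟩ fun s hs => hs.1.2
  have hTW : T ∈ W := by
    refine ⟨⟨hT0, hT1⟩, fun τ hτ => ?_⟩
    rcases lt_or_eq_of_le hτ.2 with hlt | heq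
    · obtain ⟨t', ht'W, hlt'⟩ := exists_lt_of_lt_csSup ⟨0, h0W⟩ hlt
      exact ht'W.2 τ ⟨hτ.1, hlt'.le⟩
    · rw [heq]
      refine le_of_forall_pos_le_add (fun ε hε => ?_)
      obtain ⟨t', ht'W, hlt'⟩ := exists_lt_of_lt_csSup ⟨0, h0W⟩
        (show T - ε / (c + c' + 1) < sSup W by
          rw [← hT]
          have h0 : 0 < ε / (c + c' + 1) := by positivity
          linarith)
      have ht'T : t' ≤ T := le_csSup hbdd ht'W
      have ht'0 : 0 ≤ t' := ht'W.1.1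
      have h1 : ‖u' T - u' t'‖ ≤ c' * |T - t'| := hu'L T ⟨hT0, hT1⟩ t' ht'W.1
      have h2 : ‖u T - u t'‖ ≤ c * |T - t'| := huL T ⟨hT0, hT1⟩ t' ht'W.1
      have h3 : ‖u' t' - u t'‖ ≤ ρ * t' := ht'W.2 t' ⟨ht'0, le_refl _⟩
      have habs : |T - t'| ≤ ε / (c + c' + 1) := by
        rw [abs_of_nonneg (by linarith)]
        linarith
      have h4 : c' * |T - t'| ≤ c' * (ε / (c + c' + 1)) := mul_le_mul_of_nonneg_left habs hc'0
      have h5 : c * |T - t'| ≤ c * (ε / (c + c' + 1)) := mul_le_mul_of_nonneg_left habs hc0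
      have h6 : c * (ε / (c + c' + 1)) + c' * (ε / (c + c' + 1)) ≤ ε := by
        rw [← add_mul, mul_div_assoc', div_le_iff₀ (by positivity)]
        nlinarith
      have h7 : ρ * t' ≤ ρ * T := mul_le_mul_of_nonneg_left ht'T hρ0
      calc ‖u' T - u T‖ ≤ ‖u' T - u' t'‖ + ‖u' t' - u t'‖ + ‖u t' - u T‖ := by
            have e1 : ‖u' T - u T‖ ≤ ‖u' T - u' t'‖ + ‖u' t' - u T‖ :=
              norm_sub_le_norm_sub_add_norm_sub _ _ _
            have e2 : ‖u' t' - u T‖ ≤ ‖u' t' - u t'‖ + ‖u t' - u T‖ :=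
              norm_sub_le_norm_sub_add_norm_sub _ _ _
            linarith
      _ ≤ ρ * T + ε := by
            rw [norm_sub_rev (u t') (u T)]
            linarith
  rcases eq_or_lt_of_le hT1 with heqT | hltT
  · intro t ht
    exact hTW.2 t ⟨ht.1, ht.2.trans_eq heqT.symm⟩
  exfalso
  have hgap : 0 < δ / 2 - ρ := by linarith
  set η := min (1 - T) ((δ / 2 - ρ) / (c + c' + 1)) with hη
  have hη0 : 0 < η := lt_min (by linarith) (by positivity)
  have hη1 : η ≤ 1 - T := min_le_left _ _
  have hηb : (c + c') * η ≤ δ / 2 - ρ := by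
    have h1 : η ≤ (δ / 2 - ρ) / (c + c' + 1) := min_le_right _ _
    have h2 : (c + c') * η ≤ (c + c') * ((δ / 2 - ρ) / (c + c' + 1)) :=
      mul_le_mul_of_nonneg_left h1 (by linarith)
    have h3 : (c + c') * ((δ / 2 - ρ) / (c + c' + 1)) ≤ δ / 2 - ρ := by
      rw [mul_div_assoc', div_le_iff₀ (by positivity)]
      nlinarith
    linarith
  have hmem : T + η ∈ W := by
    refine ⟨⟨by linarith, by linarith⟩, fun τ hτ => ?_⟩
    by_cases hτT : τ ≤ T
    · exact hTW.2 τ ⟨hτ.1, hτT⟩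
    push_neg at hτT
    have hτ1 : τ ≤ 1 := by linarith [hτ.2]
    have hτIcc : τ ∈ Icc (0:ℝ) 1 := ⟨hτ.1, hτ1⟩
    obtain ⟨z, hz1, hz2⟩ := lemA hα hf hcov (u τ) (y₀ + τ • (y' - y₀))
    have hfuτ : f (u τ) = y₀ + τ • (y - y₀) := huf τ hτIcc
    have hseg : (y₀ + τ • (y' - y₀)) - (y₀ + τ • (y - y₀)) = τ • (y' - y) := by
      module
    have hz1' : ‖z - u τ‖ ≤ ρ * τ := by
      refine hz1.trans ?_
      rw [hfuτ, hseg, norm_smul, Real.norm_eq_abs, abs_of_nonneg hτ.1, hρ]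
      exact le_of_eq (by ring)
    have hρτ : ρ * τ ≤ ρ := by
      calc ρ * τ ≤ ρ * 1 := mul_le_mul_of_nonneg_left hτ1 hρ0
      _ = ρ := mul_one ρ
    have hzball : z ∈ closedBall (u τ) δ := by
      rw [mem_closedBall, dist_eq_norm]
      linarith
    have hu'T : ‖u' T - u T‖ ≤ ρ * T := hTW.2 T ⟨hT0, le_refl _⟩
    have hτη : τ - T ≤ η := by linarith [hτ.2]
    have e1 : ‖u' τ - u' T‖ ≤ c' * (τ - T) := by
      have h := hu'L τ hτIcc T ⟨hT0, hT1⟩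
      rwa [abs_of_nonneg (by linarith)] at h
    have e2 : ‖u T - u τ‖ ≤ c * (τ - T) := by
      have h := huL T ⟨hT0, hT1⟩ τ hτIcc
      rwa [abs_of_nonpos (by linarith), neg_sub] at h
    have hu'ball : u' τ ∈ closedBall (u τ) δ := by
      rw [mem_closedBall, dist_eq_norm]
      have e3 : ‖u' τ - u τ‖ ≤ ‖u' τ - u' T‖ + ‖u' T - u T‖ + ‖u T - u τ‖ := by
        have f1 : ‖u' τ - u τ‖ ≤ ‖u' τ - u' T‖ + ‖u' T - u τ‖ :=
          norm_sub_le_norm_sub_add_norm_sub _ _ _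
        have f2 : ‖u' T - u τ‖ ≤ ‖u' T - u T‖ + ‖u T - u τ‖ :=
          norm_sub_le_norm_sub_add_norm_sub _ _ _
        linarith
      have e4 : c' * (τ - T) ≤ c' * η := mul_le_mul_of_nonneg_left hτη hc'0
      have e4' : c * (τ - T) ≤ c * η := mul_le_mul_of_nonneg_left hτη hc0
      have e4'' : (c + c') * η = c * η + c' * η := by ring
      have e5 : ρ * T ≤ ρ * 1 := mul_le_mul_of_nonneg_left hT1 hρ0
      have e5' : ρ * 1 = ρ := mul_one ρ
      linarith
    have hzu' : z = u' τ := (hδ τ hτIcc) hzball hu'ball (by rw [hz2, hu'f τ hτIcc])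
    rw [← hzu']
    exact hz1'
  have hle := le_csSup hbdd hmem
  rw [← hT] at hle
  linarith

theorem mainG [Nonempty G] [PreconnectedSpace G] {f : G → G} {α : ℝ} (hα : 0 < α)
    (hf : Continuous f)
    (hinj : ∀ x : G, ∃ U ∈ nhds x, Set.InjOn f U)
    (hcov : ∀ x, AlphaCoveringAt f x α) :
    Function.Bijective f ∧ ∃ g : G → G, (∀ x, g (f x) = x) ∧ (∀ y, f (g y) = y) ∧
      ∀ y₁ y₂, ‖g y₁ - g y₂‖ ≤ α⁻¹ * ‖y₁ - y₂‖ := by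
  obtain ⟨x₀⟩ := (inferInstance : Nonempty G)
  choose gu hgu using liftExists hα hf hcov hinj x₀
  set g : G → G := fun y => gu y 1 with hg
  have hsec : ∀ y, f (g y) = y := by
    intro y
    have h := (hgu y).2.1 1 ⟨zero_le_one, le_refl _⟩
    rw [one_smul, add_sub_cancel] at h
    exact h
  have hgloc : ∀ y, ∃ ρ > (0:ℝ), ∀ y', ‖y' - y‖ < ρ → ‖g y' - g y‖ ≤ α⁻¹ * ‖y' - y‖ := by
    intro y
    obtain ⟨δ, hδ0, hδ⟩ := unifInj hα hinj (hgu y)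
    refine ⟨α * (δ / 2), by positivity, fun y' hy' => ?_⟩
    have hclose : α⁻¹ * ‖y' - y‖ < δ / 2 := by
      have h := mul_lt_mul_of_pos_left hy' (inv_pos.mpr hα)
      rwa [← mul_assoc, inv_mul_cancel₀ hα.ne', one_mul] at h
    have h := liftCompare hα hf hcov (hgu y) (hgu y') hδ0 hδ hclose 1 ⟨zero_le_one, le_refl _⟩
    rwa [mul_one] at h
  have hgcont : Continuous g := by
    rw [continuous_iff_continuousAt]
    intro y
    rw [Metric.continuousAt_iff]
    intro ε hε
    obtain ⟨ρ, hρ0, hloc⟩ := hgloc y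
    refine ⟨min ρ (α * ε / 2), by positivity, ?_⟩
    intro y' hy'
    rw [dist_eq_norm] at hy' ⊢
    have h1 : ‖y' - y‖ < ρ := lt_of_lt_of_le hy' (min_le_left _ _)
    have h2 : ‖y' - y‖ < α * ε / 2 := lt_of_lt_of_le hy' (min_le_right _ _)
    have h3 := hloc y' h1
    have h4 : α⁻¹ * ‖y' - y‖ < α⁻¹ * (α * ε / 2) := by
      exact mul_lt_mul_of_pos_left h2 (inv_pos.mpr hα)
    have h5 : α⁻¹ * (α * ε / 2) = ε / 2 := by field_simp
    linarith
  have hopen : IsOpen (Set.range g) := by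
    rw [Metric.isOpen_iff]
    rintro x ⟨y, rfl⟩
    obtain ⟨δ, hδ0, hδinj⟩ := injrad hinj (g y)
    obtain ⟨κ, hκ0, hκ⟩ := Metric.continuousAt_iff.mp hgcont.continuousAt δ hδ0
    obtain ⟨σ, hσ0, hσ⟩ := Metric.continuousAt_iff.mp hf.continuousAt κ hκ0
    refine ⟨min σ δ, lt_min hσ0 hδ0, ?_⟩
    intro x' hx'
    have h1 : dist (f x') (f (g y)) < κ := hσ (lt_of_lt_of_le hx' (min_le_left _ _))
    rw [hsec y] at h1
    have h2 : dist (g (f x')) (g y) < δ := hκ h1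
    have h3 : g (f x') = x' := by
      refine hδinj (mem_closedBall.mpr h2.le) ?_ (by rw [hsec])
      exact mem_closedBall.mpr (le_of_lt (lt_of_lt_of_le hx' (min_le_right _ _)))
    exact ⟨f x', h3⟩
  have hclosedr : IsClosed (Set.range g) := by
    refine isClosed_of_closure_subset (fun x hx => ?_)
    obtain ⟨xs, hxs, hlim⟩ := mem_closure_iff_seq_limit.mp hx
    choose ys hys using hxs
    have h2 : ∀ n, f (xs n) = ys n := by
      intro n; rw [← hys n, hsec]
    have h1 : Filter.Tendsto (fun n => f (xs n)) Filter.atTop (nhds (f x)) :=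
      (hf.tendsto x).comp hlim
    rw [funext h2] at h1
    have h3 : Filter.Tendsto (fun n => g (ys n)) Filter.atTop (nhds (g (f x))) :=
      (hgcont.tendsto (f x)).comp h1
    have h4 : (fun n => g (ys n)) = xs := funext hys
    rw [h4] at h3
    exact ⟨f x, (tendsto_nhds_unique hlim h3).symm⟩
  have huniv : Set.range g = Set.univ :=
    IsClopen.eq_univ ⟨hclosedr, hopen⟩ ⟨g (f x₀), Set.mem_range_self _⟩
  have hsurj_g : Function.Surjective g := fun x => by
    have : x ∈ Set.range g := huniv ▸ Set.mem_univ x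
    exact this
  have hfinj : Function.Injective f := by
    intro a b hab
    obtain ⟨p, rfl⟩ := hsurj_g a
    obtain ⟨q, rfl⟩ := hsurj_g b
    rw [hsec p, hsec q] at hab
    rw [hab]
  have hgf : ∀ x, g (f x) = x := fun x => hfinj (hsec (f x))
  refine ⟨⟨hfinj, fun y => ⟨g y, hsec y⟩⟩, g, hgf, hsec, ?_⟩
  intro y₁ y₂
  obtain ⟨z, hz1, hz2⟩ := lemA hα hf hcov (g y₁) y₂
  have hzg : z = g y₂ := hfinj (by rw [hz2, hsec y₂])
  rw [hsec y₁] at hz1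
  rw [norm_sub_rev, ← hzg, norm_sub_rev y₁ y₂]
  exact hz1


/-- Arutyunov–Zhukovskiy global inversion theorem: a continuous, locally
injective map `ℝⁿ → ℝⁿ` that is `α`-covering at every point is a bijection
whose inverse is Lipschitz with constant `α⁻¹`. -/
theorem stmt0 (n : ℕ) (f : EuclideanSpace ℝ (Fin n) → EuclideanSpace ℝ (Fin n))
    (α : ℝ) (hα : 0 < α)
    (hcont : Continuous f)
    (hinj : ∀ x : EuclideanSpace ℝ (Fin n), ∃ U ∈ nhds x, Set.InjOn f U)
    (hcov : ∀ x : EuclideanSpace ℝ (Fin n), AlphaCoveringAt f x α) :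
    Function.Bijective f ∧
    ∃ g : EuclideanSpace ℝ (Fin n) → EuclideanSpace ℝ (Fin n),
      (∀ x, g (f x) = x) ∧ (∀ y, f (g y) = y) ∧
      ∀ y₁ y₂, ‖g y₁ - g y₂‖ ≤ α⁻¹ * ‖y₁ - y₂‖ :=
  mainG hα hcont hinj hcov
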